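/- Fix η > 3 and define b₁ = (1−η, 1, 1), b₂ = (1, 1−η, 1), b₃ = (1, 1, 1−η) in ℝ³. Then for every unit vector x ∈ ℝ³ having at least one strictly negative coordinate: (i) max_{i ∈ {1,2,3}} ⟨b_i,x⟩ > 0, and (ii) max_{i ∈ {1,2,3}} ⟨b_i,x⟩ ≥ ⟨p,x⟩ for every p ∈ [0,1]³. In other words, outside the nonnegative orthant of utility vectors, the point with the highest score among [0,1]³ ∪ {b₁,b₂,b₃} is always one of b₁, b₂, b₃, and its score is positive. -/

import Mathlib

open scoped RealInnerProductSpace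

private lemma coord_le (p a m : ℝ) (hp0 : 0 ≤ p) (hp1 : p ≤ 1) (hm : m < 0)
    (ha : m ≤ a) : p * a ≤ a - m := by
  rcases le_or_gt 0 a with h | h
  · nlinarith
  · nlinarith

/-- For `η > 3`, `b₁ = (1−η,1,1)`, `b₂ = (1,1−η,1)`, `b₃ = (1,1,1−η)`,
every unit vector `x ∈ ℝ³` with a strictly negative coordinate satisfies
(i) `max_i ⟪b_i,x⟫ > 0` and (ii) `max_i ⟪b_i,x⟫ ≥ ⟪p,x⟫` for every `p ∈ [0,1]³`. -/
theorem stmt13 (η : ℝ) (hη : 3 < η)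
    (b₁ b₂ b₃ : EuclideanSpace ℝ (Fin 3))
    (hb₁ : b₁ = ![1 - η, 1, 1]) (hb₂ : b₂ = ![1, 1 - η, 1])
    (hb₃ : b₃ = ![1, 1, 1 - η]) :
    ∀ x : EuclideanSpace ℝ (Fin 3), ‖x‖ = 1 → (∃ i, x i < 0) →
      0 < max (max ⟪b₁, x⟫ ⟪b₂, x⟫) ⟪b₃, x⟫ ∧
      ∀ p : EuclideanSpace ℝ (Fin 3), (∀ i, p i ∈ Set.Icc (0 : ℝ) 1) →
        ⟪p, x⟫ ≤ max (max ⟪b₁, x⟫ ⟪b₂, x⟫) ⟪b₃, x⟫ := by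
  intro x hx hneg
  have e1 : ⟪b₁, x⟫ = (1 - η) * x 0 + x 1 + x 2 := by
    simp [hb₁, PiLp.inner_apply, Fin.sum_univ_three]; ring
  have e2 : ⟪b₂, x⟫ = x 0 + (1 - η) * x 1 + x 2 := by
    simp [hb₂, PiLp.inner_apply, Fin.sum_univ_three]; ring
  have e3 : ⟪b₃, x⟫ = x 0 + x 1 + (1 - η) * x 2 := by
    simp [hb₃, PiLp.inner_apply, Fin.sum_univ_three]; ring
  have key : ∀ m : ℝ, m < 0 → m ≤ x 0 → m ≤ x 1 → m ≤ x 2 →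
      (0 < (x 0 + x 1 + x 2) - η * m ∧
       ∀ p : EuclideanSpace ℝ (Fin 3), (∀ i, p i ∈ Set.Icc (0 : ℝ) 1) →
         ⟪p, x⟫ ≤ (x 0 + x 1 + x 2) - η * m) := by
    intro m hm h0 h1 h2
    constructor
    · nlinarith
    · intro p hp
      have ep : ⟪p, x⟫ = p 0 * x 0 + p 1 * x 1 + p 2 * x 2 := by
        simp [PiLp.inner_apply, Fin.sum_univ_three]; ring
      have c0 := coord_le (p 0) (x 0) m (hp 0).1 (hp 0).2 hm h0
      have c1 := coord_le (p 1) (x 1) m (hp 1).1 (hp 1).2 hm h1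
      have c2 := coord_le (p 2) (x 2) m (hp 2).1 (hp 2).2 hm h2
      rw [ep]
      nlinarith
  have hm0 : min (x 0) (min (x 1) (x 2)) < 0 := by
    obtain ⟨i, hi⟩ := hneg
    fin_cases i
    · exact lt_of_le_of_lt (min_le_left _ _) hi
    · exact lt_of_le_of_lt (le_trans (min_le_right _ _) (min_le_left _ _)) hi
    · exact lt_of_le_of_lt (le_trans (min_le_right _ _) (min_le_right _ _)) hi
  set m := min (x 0) (min (x 1) (x 2)) with hmdef
  have h0 : m ≤ x 0 := min_le_left _ _
  have h1 : m ≤ x 1 := le_trans (min_le_right _ _) (min_le_left _ _)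
  have h2 : m ≤ x 2 := le_trans (min_le_right _ _) (min_le_right _ _)
  obtain ⟨hpos, hdom⟩ := key m hm0 h0 h1 h2
  have hM : (x 0 + x 1 + x 2) - η * m ≤ max (max ⟪b₁, x⟫ ⟪b₂, x⟫) ⟪b₃, x⟫ := by
    have : m = x 0 ∨ m = x 1 ∨ m = x 2 := by
      simp only [hmdef]
      rcases le_total (x 0) (min (x 1) (x 2)) with h | h
      · left; exact min_eq_left h
      · right
        rcases le_total (x 1) (x 2) with h' | h'
        · left; rw [min_eq_right h, min_eq_left h']
        · right; rw [min_eq_right h, min_eq_right h']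
    rcases this with h | h | h
    · calc (x 0 + x 1 + x 2) - η * m = ⟪b₁, x⟫ := by rw [e1, h]; ring
        _ ≤ _ := le_trans (le_max_left _ _) (le_max_left _ _)
    · calc (x 0 + x 1 + x 2) - η * m = ⟪b₂, x⟫ := by rw [e2, h]; ring
        _ ≤ _ := le_trans (le_max_right _ _) (le_max_left _ _)
    · calc (x 0 + x 1 + x 2) - η * m = ⟪b₃, x⟫ := by rw [e3, h]; ring
          _ ≤ _ := le_max_right _ _
  exact ⟨lt_of_lt_of_le hpos hM, fun p hp => le_trans (hdom p hp) hM⟩
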